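/- arXiv:math/0204280 — 2 statements merged into one kernel-verified Lean document; each statement's English description precedes it below -/
import Mathlib

section
/- Let (T, m_T, 1_T, μ_T, θ_T) be an A-torsor. Then for all x ∈ T, writing μ_T(x) = x^{(1)} ⊗ x^{(2)} ⊗ x^{(3)} and μ_T(x^{(2)}) = x^{(2)(1)} ⊗ x^{(2)(2)} ⊗ x^{(2)(3)} in Sweedler notation (with implicit summation), one has θ_T(x) = x^{(1)} · x^{(2)(3)} · x^{(2)(2)} · x^{(2)(1)} · x^{(3)}, where the product is taken in T. In particular θ_T is uniquely determined by m_T and μ_T. -/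
set_option synthInstance.maxHeartbeats 1000000
set_option maxHeartbeats 1000000


/- Common setup: quantum torsors following Grunspan, "Quantum torsors".
   `T` is an `A`-algebra; the torsor law is an algebra morphism
   `μ : T → T ⊗[A] (Tᵐᵒᵖ ⊗[A] (T))` and `θ : T → T` is an algebra automorphism. -/

open scoped TensorProduct
open TensorProduct

namespace QT

variable (A : Type*) [CommRing A] (T : Type*) [Ring T] [Algebra A T]

/-- `unop` as an `A`-linear map. -/
noncomputable def unopL : Tᵐᵒᵖ →ₗ[A] T :=
  (MulOpposite.opLinearEquiv A : T ≃ₗ[A] Tᵐᵒᵖ).symm.toLinearMap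

/-- `op` as an `A`-linear map. -/
noncomputable def opL : T →ₗ[A] Tᵐᵒᵖ :=
  (MulOpposite.opLinearEquiv A : T ≃ₗ[A] Tᵐᵒᵖ).toLinearMap

/-- multiplication of `T` as a linear map. -/
noncomputable def mulTT : T ⊗[A] T →ₗ[A] T := LinearMap.mul' A T

/-- multiplication `Tᵐᵒᵖ ⊗ T → T`, forgetting the `op`s. -/
noncomputable def mulOT : Tᵐᵒᵖ ⊗[A] T →ₗ[A] T :=
  mulTT A T ∘ₗ map (unopL A T) LinearMap.id

/-- multiplication `T ⊗ Tᵐᵒᵖ → T`, forgetting the `op`s. -/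
noncomputable def mulTO : T ⊗[A] Tᵐᵒᵖ →ₗ[A] T :=
  mulTT A T ∘ₗ map LinearMap.id (unopL A T)

/-- the permutation `τ₍₁₃₎` of the outer factors of `T ⊗ Tᵐᵒᵖ ⊗ T`. -/
noncomputable def tau13 : T ⊗[A] (Tᵐᵒᵖ ⊗[A] (T)) ≃ₗ[A] T ⊗[A] (Tᵐᵒᵖ ⊗[A] (T)) :=
  TensorProduct.congr (LinearEquiv.refl A T) (TensorProduct.comm A Tᵐᵒᵖ T) ≪≫ₗ
  (TensorProduct.assoc A T T Tᵐᵒᵖ).symm ≪≫ₗ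
  TensorProduct.congr (TensorProduct.comm A T T) (LinearEquiv.refl A Tᵐᵒᵖ) ≪≫ₗ
  TensorProduct.assoc A T T Tᵐᵒᵖ ≪≫ₗ
  TensorProduct.congr (LinearEquiv.refl A T) (TensorProduct.comm A T Tᵐᵒᵖ)

/-- exchange the `op` pattern `T ⊗ Tᵐᵒᵖ ⊗ T ↦ Tᵐᵒᵖ ⊗ T ⊗ Tᵐᵒᵖ` (identity on elements). -/
noncomputable def oppify : T ⊗[A] (Tᵐᵒᵖ ⊗[A] (T)) →ₗ[A] Tᵐᵒᵖ ⊗[A] (T ⊗[A] (Tᵐᵒᵖ)) :=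
  map (opL A T) (map (unopL A T) (opL A T))

/-- `μᵒᵖ := τ₍₁₃₎ ∘ μ` applied to an element of `Tᵐᵒᵖ`, with the `op`-pattern adjusted. -/
noncomputable def muopO (μ : T →ₗ[A] T ⊗[A] (Tᵐᵒᵖ ⊗[A] (T))) :
    Tᵐᵒᵖ →ₗ[A] Tᵐᵒᵖ ⊗[A] (T ⊗[A] (Tᵐᵒᵖ)) :=
  oppify A T ∘ₗ (tau13 A T).toLinearMap ∘ₗ μ ∘ₗ unopL A T

/-- `θ` viewed as a map of `Tᵐᵒᵖ`. -/
noncomputable def thetaOp (θ : T →ₗ[A] T) : Tᵐᵒᵖ →ₗ[A] Tᵐᵒᵖ :=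
  opL A T ∘ₗ θ ∘ₗ unopL A T

/-- multiplication of the first two factors of `T ⊗ Tᵐᵒᵖ ⊗ T`. -/
noncomputable def m12 : T ⊗[A] (Tᵐᵒᵖ ⊗[A] (T)) →ₗ[A] T ⊗[A] T :=
  map (mulTO A T) LinearMap.id ∘ₗ (TensorProduct.assoc A T Tᵐᵒᵖ T).symm.toLinearMap

/-- `Id ⊗ Id ⊗ μ` on `T ⊗ Tᵐᵒᵖ ⊗ T`. -/
noncomputable def mu3 (μ : T →ₗ[A] T ⊗[A] (Tᵐᵒᵖ ⊗[A] (T))) :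
    T ⊗[A] (Tᵐᵒᵖ ⊗[A] (T)) →ₗ[A] T ⊗[A] (Tᵐᵒᵖ ⊗[A] (T ⊗[A] (Tᵐᵒᵖ ⊗[A] (T)))) :=
  map LinearMap.id (map LinearMap.id μ)

/-- `μ ⊗ Id ⊗ Id` on `T ⊗ Tᵐᵒᵖ ⊗ T` (suitably reassociated). -/
noncomputable def mu1 (μ : T →ₗ[A] T ⊗[A] (Tᵐᵒᵖ ⊗[A] (T))) :
    T ⊗[A] (Tᵐᵒᵖ ⊗[A] (T)) →ₗ[A] T ⊗[A] (Tᵐᵒᵖ ⊗[A] (T ⊗[A] (Tᵐᵒᵖ ⊗[A] (T)))) :=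
  map LinearMap.id (TensorProduct.assoc A Tᵐᵒᵖ T (Tᵐᵒᵖ ⊗[A] T)).toLinearMap ∘ₗ
  (TensorProduct.assoc A T (Tᵐᵒᵖ ⊗[A] T) (Tᵐᵒᵖ ⊗[A] T)).toLinearMap ∘ₗ
  map μ LinearMap.id

/-- `θ` applied to the third of five tensor factors. -/
noncomputable def theta3 (θ : T →ₗ[A] T) :
    T ⊗[A] (Tᵐᵒᵖ ⊗[A] (T ⊗[A] (Tᵐᵒᵖ ⊗[A] (T)))) →ₗ[A] T ⊗[A] (Tᵐᵒᵖ ⊗[A] (T ⊗[A] (Tᵐᵒᵖ ⊗[A] (T)))) :=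
  map LinearMap.id (map LinearMap.id (map θ LinearMap.id))

/-- `Id ⊗ μᵒᵖ ⊗ Id` on `T ⊗ Tᵐᵒᵖ ⊗ T`. -/
noncomputable def muMid (μ : T →ₗ[A] T ⊗[A] (Tᵐᵒᵖ ⊗[A] (T))) :
    T ⊗[A] (Tᵐᵒᵖ ⊗[A] (T)) →ₗ[A] T ⊗[A] (Tᵐᵒᵖ ⊗[A] (T ⊗[A] (Tᵐᵒᵖ ⊗[A] (T)))) :=
  map LinearMap.id
    (map LinearMap.id (TensorProduct.assoc A T Tᵐᵒᵖ T).toLinearMap ∘ₗ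
     (TensorProduct.assoc A Tᵐᵒᵖ (T ⊗[A] Tᵐᵒᵖ) T).toLinearMap ∘ₗ
     map (muopO A T μ) LinearMap.id)

/-- Grunspan's axioms for a quantum torsor `(T, m_T, 1_T, μ, θ)` (Definition 2.1). -/
structure IsTorsor (μ : T →ₗ[A] T ⊗[A] (Tᵐᵒᵖ ⊗[A] (T))) (θ : T →ₗ[A] T) : Prop where
  /-- `μ` is an algebra morphism into `T ⊗ Tᵒᵖ ⊗ T`: unitality -/
  map_one : μ 1 = 1
  /-- `μ` is an algebra morphism into `T ⊗ Tᵒᵖ ⊗ T`: multiplicativity -/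
  map_mul : ∀ x y : T, μ (x * y) = μ x * μ y
  /-- `θ` is an algebra automorphism -/
  theta_one : θ 1 = 1
  theta_mul : ∀ x y : T, θ (x * y) = θ x * θ y
  theta_bij : Function.Bijective θ
  /-- `(Id ⊗ m) ∘ μ (x) = x ⊗ 1` -/
  left_law : ∀ x : T, map LinearMap.id (mulOT A T) (μ x) = x ⊗ₜ[A] (1 : T)
  /-- `(m ⊗ Id) ∘ μ (x) = 1 ⊗ x` -/
  right_law : ∀ x : T, m12 A T (μ x) = (1 : T) ⊗ₜ[A] x
  /-- `(Id ⊗ Id ⊗ μ) ∘ μ = (μ ⊗ Id ⊗ Id) ∘ μ` -/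
  coassoc : ∀ x : T, mu3 A T μ (μ x) = mu1 A T μ (μ x)
  /-- `θ⁽³⁾ ∘ (μ ⊗ Id ⊗ Id) ∘ μ = (Id ⊗ μᵒᵖ ⊗ Id) ∘ μ` -/
  theta_law : ∀ x : T, theta3 A T θ (mu1 A T μ (μ x)) = muMid A T μ (μ x)
  /-- `(θ ⊗ θ ⊗ θ) ∘ μ = μ ∘ θ` -/
  theta_compat : ∀ x : T, map θ (map (thetaOp A T θ) θ) (μ x) = μ (θ x)

/-- multiplication of all five factors of `T ⊗ Tᵐᵒᵖ ⊗ T ⊗ Tᵐᵒᵖ ⊗ T`, in order, in `T`. -/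
noncomputable def mult5 : T ⊗[A] (Tᵐᵒᵖ ⊗[A] (T ⊗[A] (Tᵐᵒᵖ ⊗[A] (T)))) →ₗ[A] T :=
  mulTT A T ∘ₗ
    map LinearMap.id
      (mulOT A T ∘ₗ map LinearMap.id (mulTT A T ∘ₗ map LinearMap.id (mulOT A T)))

/-- the law `μᵒᵖ = τ₍₁₃₎ ∘ μ` of the opposite torsor, as a map on `Tᵐᵒᵖ`. -/
noncomputable def muOpp (μ : T →ₗ[A] T ⊗[A] (Tᵐᵒᵖ ⊗[A] (T))) :
    Tᵐᵒᵖ →ₗ[A] Tᵐᵒᵖ ⊗[A] (Tᵐᵒᵖᵐᵒᵖ ⊗[A] (Tᵐᵒᵖ)) :=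
  map (opL A T) (map (opL A Tᵐᵒᵖ) (opL A T)) ∘ₗ (tau13 A T).toLinearMap ∘ₗ μ ∘ₗ unopL A T

/-- the defining condition of `H_l(T)`: left-hand side. -/
noncomputable def lmapL (μ : T →ₗ[A] T ⊗[A] (Tᵐᵒᵖ ⊗[A] (T))) (θ : T →ₗ[A] T) :
    T ⊗[A] Tᵐᵒᵖ →ₗ[A] T ⊗[A] (Tᵐᵒᵖ ⊗[A] (T ⊗[A] (Tᵐᵒᵖ))) :=
  map LinearMap.id (map LinearMap.id (map θ LinearMap.id)) ∘ₗ
  map LinearMap.id (TensorProduct.assoc A Tᵐᵒᵖ T Tᵐᵒᵖ).toLinearMap ∘ₗ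
  (TensorProduct.assoc A T (Tᵐᵒᵖ ⊗[A] T) Tᵐᵒᵖ).toLinearMap ∘ₗ
  map μ LinearMap.id

/-- the defining condition of `H_l(T)`: right-hand side `(Id ⊗ μᵒᵖ)`. -/
noncomputable def rmapL (μ : T →ₗ[A] T ⊗[A] (Tᵐᵒᵖ ⊗[A] (T))) :
    T ⊗[A] Tᵐᵒᵖ →ₗ[A] T ⊗[A] (Tᵐᵒᵖ ⊗[A] (T ⊗[A] (Tᵐᵒᵖ))) :=
  map LinearMap.id (muopO A T μ)

/-- the subspace `H_l(T) ⊆ T ⊗ Tᵐᵒᵖ`. -/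
noncomputable def Hl (μ : T →ₗ[A] T ⊗[A] (Tᵐᵒᵖ ⊗[A] (T))) (θ : T →ₗ[A] T) :
    Submodule A (T ⊗[A] Tᵐᵒᵖ) :=
  LinearMap.eqLocus (lmapL A T μ θ) (rmapL A T μ)

/-- the defining condition of `H_r(T)`: left-hand side. -/
noncomputable def lmapR (μ : T →ₗ[A] T ⊗[A] (Tᵐᵒᵖ ⊗[A] (T))) (θ : T →ₗ[A] T) :
    Tᵐᵒᵖ ⊗[A] T →ₗ[A] Tᵐᵒᵖ ⊗[A] (T ⊗[A] (Tᵐᵒᵖ ⊗[A] (T))) :=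
  map LinearMap.id (map θ LinearMap.id) ∘ₗ map LinearMap.id μ

/-- the defining condition of `H_r(T)`: right-hand side `(μᵒᵖ ⊗ Id)`. -/
noncomputable def rmapR (μ : T →ₗ[A] T ⊗[A] (Tᵐᵒᵖ ⊗[A] (T))) :
    Tᵐᵒᵖ ⊗[A] T →ₗ[A] Tᵐᵒᵖ ⊗[A] (T ⊗[A] (Tᵐᵒᵖ ⊗[A] (T))) :=
  map LinearMap.id (TensorProduct.assoc A T Tᵐᵒᵖ T).toLinearMap ∘ₗ
  (TensorProduct.assoc A Tᵐᵒᵖ (T ⊗[A] Tᵐᵒᵖ) T).toLinearMap ∘ₗ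
  map (muopO A T μ) LinearMap.id

/-- the subspace `H_r(T) ⊆ Tᵐᵒᵖ ⊗ T`. -/
noncomputable def Hr (μ : T →ₗ[A] T ⊗[A] (Tᵐᵒᵖ ⊗[A] (T))) (θ : T →ₗ[A] T) :
    Submodule A (Tᵐᵒᵖ ⊗[A] T) :=
  LinearMap.eqLocus (lmapR A T μ θ) (rmapR A T μ)

/-- comultiplication `(μ ⊗ Id)` of `H_l(T)`, on the ambient space. -/
noncomputable def deltaL (μ : T →ₗ[A] T ⊗[A] (Tᵐᵒᵖ ⊗[A] (T))) :
    T ⊗[A] Tᵐᵒᵖ →ₗ[A] (T ⊗[A] Tᵐᵒᵖ) ⊗[A] (T ⊗[A] Tᵐᵒᵖ) :=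
  (TensorProduct.assoc A T Tᵐᵒᵖ (T ⊗[A] Tᵐᵒᵖ)).symm.toLinearMap ∘ₗ
  map LinearMap.id (TensorProduct.assoc A Tᵐᵒᵖ T Tᵐᵒᵖ).toLinearMap ∘ₗ
  (TensorProduct.assoc A T (Tᵐᵒᵖ ⊗[A] T) Tᵐᵒᵖ).toLinearMap ∘ₗ
  map μ LinearMap.id

/-- `x ↦ ε(x) • 1` for `H_l(T)`, i.e. `x ↦ m_T(x) ⊗ 1`. -/
noncomputable def epsL : T ⊗[A] Tᵐᵒᵖ →ₗ[A] T ⊗[A] Tᵐᵒᵖ :=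
  (TensorProduct.mk A T Tᵐᵒᵖ).flip 1 ∘ₗ mulTO A T

/-- antipode `x ↦ τ₍₁₂₎ ((Id ⊗ θ) x)` of `H_l(T)`, on the ambient space. -/
noncomputable def antipodeL (θ : T →ₗ[A] T) : T ⊗[A] Tᵐᵒᵖ →ₗ[A] T ⊗[A] Tᵐᵒᵖ :=
  map (unopL A T) (opL A T) ∘ₗ (TensorProduct.comm A T Tᵐᵒᵖ).toLinearMap ∘ₗ
  map LinearMap.id (thetaOp A T θ)

/-- comultiplication `(Id ⊗ μ)` of `H_r(T)`, on the ambient space. -/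
noncomputable def deltaR (μ : T →ₗ[A] T ⊗[A] (Tᵐᵒᵖ ⊗[A] (T))) :
    Tᵐᵒᵖ ⊗[A] T →ₗ[A] (Tᵐᵒᵖ ⊗[A] T) ⊗[A] (Tᵐᵒᵖ ⊗[A] T) :=
  (TensorProduct.assoc A Tᵐᵒᵖ T (Tᵐᵒᵖ ⊗[A] T)).symm.toLinearMap ∘ₗ map LinearMap.id μ

/-- `x ↦ ε(x) • 1` for `H_r(T)`. -/
noncomputable def epsR : Tᵐᵒᵖ ⊗[A] T →ₗ[A] Tᵐᵒᵖ ⊗[A] T :=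
  TensorProduct.mk A Tᵐᵒᵖ T 1 ∘ₗ mulOT A T

/-- antipode of `H_r(T)`, on the ambient space. -/
noncomputable def antipodeR (θ : T →ₗ[A] T) : Tᵐᵒᵖ ⊗[A] T →ₗ[A] Tᵐᵒᵖ ⊗[A] T :=
  map (opL A T) (unopL A T) ∘ₗ (TensorProduct.comm A Tᵐᵒᵖ T).toLinearMap ∘ₗ
  map (thetaOp A T θ) LinearMap.id

/-- `H` is a sub-Hopf-algebra of the `A`-algebra `B` with respect to comultiplication `Δ`,
`unit∘counit = e` and antipode `S` (all given as maps of the ambient algebra; `e x = ε(x) • 1`). -/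
structure IsHopfOn (B : Type*) [Ring B] [Algebra A B] (H : Submodule A B)
    (Δ : B →ₗ[A] B ⊗[A] B) (e : B →ₗ[A] B) (S : B →ₗ[A] B) : Prop where
  one_mem : (1 : B) ∈ H
  mul_mem : ∀ x ∈ H, ∀ y ∈ H, x * y ∈ H
  comul_mem : ∀ x ∈ H, Δ x ∈ LinearMap.range (map H.subtype H.subtype)
  antipode_mem : ∀ x ∈ H, S x ∈ H
  counit_scalar : ∀ x ∈ H, ∃ a : A, e x = a • (1 : B)
  comul_one : Δ 1 = (1 : B) ⊗ₜ[A] (1 : B)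
  comul_mul : ∀ x ∈ H, ∀ y ∈ H, Δ (x * y) = Δ x * Δ y
  counit_one : e 1 = 1
  counit_mul : ∀ x ∈ H, ∀ y ∈ H, e (x * y) = e x * e y
  coassoc : ∀ x ∈ H, map Δ LinearMap.id (Δ x)
      = (TensorProduct.assoc A B B B).symm (map LinearMap.id Δ (Δ x))
  counit_left : ∀ x ∈ H, LinearMap.mul' A B (map e LinearMap.id (Δ x)) = x
  counit_right : ∀ x ∈ H, LinearMap.mul' A B (map LinearMap.id e (Δ x)) = x
  antipode_left : ∀ x ∈ H, LinearMap.mul' A B (map S LinearMap.id (Δ x)) = e x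
  antipode_right : ∀ x ∈ H, LinearMap.mul' A B (map LinearMap.id S (Δ x)) = e x

/-- `φ` restricts to an isomorphism of Hopf algebras between the sub-Hopf-algebra `H` of `B`
(with structure maps `Δ, e, S`) and the sub-Hopf-algebra `H'` of `B'` (with `Δ', e', S'`). -/
structure IsHopfIso {B : Type*} [Ring B] [Algebra A B] {B' : Type*} [Ring B'] [Algebra A B']
    (H : Submodule A B) (Δ : B →ₗ[A] B ⊗[A] B) (e : B →ₗ[A] B) (S : B →ₗ[A] B)
    (H' : Submodule A B') (Δ' : B' →ₗ[A] B' ⊗[A] B') (e' : B' →ₗ[A] B') (S' : B' →ₗ[A] B')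
    (φ : B →ₗ[A] B') : Prop where
  maps_to : ∀ x ∈ H, φ x ∈ H'
  inj : Set.InjOn φ (H : Set B)
  surj : ∀ y ∈ H', ∃ x ∈ H, φ x = y
  map_one : φ 1 = 1
  map_mul : ∀ x ∈ H, ∀ y ∈ H, φ (x * y) = φ x * φ y
  comul_comp : ∀ x ∈ H, map φ φ (Δ x) = Δ' (φ x)
  counit_comp : ∀ x ∈ H, φ (e x) = e' (φ x)
  antipode_comp : ∀ x ∈ H, φ (S x) = S' (φ x)

/-- the left coaction: `μ` with its target reassociated as `(T ⊗ Tᵐᵒᵖ) ⊗ T`. -/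
noncomputable def rhoL (μ : T →ₗ[A] T ⊗[A] (Tᵐᵒᵖ ⊗[A] (T))) :
    T →ₗ[A] (T ⊗[A] Tᵐᵒᵖ) ⊗[A] T :=
  (TensorProduct.assoc A T Tᵐᵒᵖ T).symm.toLinearMap ∘ₗ μ

/-- `(ε ⊗ Id)`-contraction for the left coaction. -/
noncomputable def collapseL : (T ⊗[A] Tᵐᵒᵖ) ⊗[A] T →ₗ[A] T :=
  mulTT A T ∘ₗ map (mulTO A T) LinearMap.id

/-- `(Id ⊗ ε)`-contraction for the right coaction. -/
noncomputable def collapseR : T ⊗[A] (Tᵐᵒᵖ ⊗[A] (T)) →ₗ[A] T :=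
  mulTT A T ∘ₗ map LinearMap.id (mulOT A T)

/-- forget the `op` on the second factor. -/
noncomputable def forgetL : T ⊗[A] Tᵐᵒᵖ ≃ₗ[A] T ⊗[A] T :=
  TensorProduct.congr (LinearEquiv.refl A T) (MulOpposite.opLinearEquiv A : T ≃ₗ[A] Tᵐᵒᵖ).symm

/-- forget the `op` on the first factor. -/
noncomputable def forgetR : Tᵐᵒᵖ ⊗[A] T ≃ₗ[A] T ⊗[A] T :=
  TensorProduct.congr (MulOpposite.opLinearEquiv A : T ≃ₗ[A] Tᵐᵒᵖ).symm (LinearEquiv.refl A T)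

end QT


namespace QT
variable (A : Type*) [CommRing A] (T : Type*) [Ring T] [Algebra A T]

/-- auxiliary map: `a ⊗ b ⊗ c ↦ a * unop b * θ c`. -/
noncomputable def Fth (θ : T →ₗ[A] T) : T ⊗[A] (Tᵐᵒᵖ ⊗[A] (T)) →ₗ[A] T :=
  mulTT A T ∘ₗ map LinearMap.id (mulTT A T ∘ₗ map (unopL A T) θ)

lemma K1 (μ : T →ₗ[A] T ⊗[A] (Tᵐᵒᵖ ⊗[A] (T))) (θ : T →ₗ[A] T) (z : T ⊗[A] (Tᵐᵒᵖ ⊗[A] (T))) :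
    mult5 A T (theta3 A T θ (mu1 A T μ z)) =
      mulTT A T (map (Fth A T θ ∘ₗ μ) (mulOT A T) z) := by
  induction z using TensorProduct.induction_on with
  | zero => simp
  | add u v hu hv => simp [map_add, hu, hv]
  | tmul x u =>
    induction u using TensorProduct.induction_on with
    | zero => simp
    | add u v hu hv => simp [tmul_add, map_add, hu, hv]
    | tmul b c =>
      simp only [mu1, LinearMap.comp_apply, map_tmul, LinearMap.id_coe, id_eq]
      generalize μ x = w
      induction w using TensorProduct.induction_on with
      | zero => simp
      | add u v hu hv => simp only [add_tmul, map_add, hu, hv, LinearMap.add_apply,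
          LinearEquiv.map_add, add_mul] at *
      | tmul a u =>
        induction u using TensorProduct.induction_on with
        | zero => simp
        | add u v hu hv =>
          simp only [tmul_add, add_tmul, map_add, LinearEquiv.map_add, hu, hv,
            mul_add, add_mul] at *
        | tmul b' c' =>
          simp [mult5, theta3, mu1, Fth, mulTT, mulOT, unopL, mul_assoc]

lemma K2 (μ : T →ₗ[A] T ⊗[A] (Tᵐᵒᵖ ⊗[A] (T))) (θ : T →ₗ[A] T)
    (hr : ∀ x : T, m12 A T (μ x) = (1 : T) ⊗ₜ[A] x) (x : T) :
    Fth A T θ (μ x) = θ x := by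
  have hF : Fth A T θ = mulTT A T ∘ₗ map LinearMap.id θ ∘ₗ m12 A T := by
    apply TensorProduct.ext'
    intro a u
    induction u using TensorProduct.induction_on with
    | zero => simp
    | add u v hu hv => simp only [tmul_add, map_add, hu, hv]
    | tmul b c => simp [Fth, m12, mulTT, mulTO, unopL, mul_assoc]
  rw [hF]
  simp [hr x, mulTT]

end QT

open TensorProduct QT in
/-- on a torsor, `θ(x) = x⁽¹⁾ x⁽²⁾⁽³⁾ x⁽²⁾⁽²⁾ x⁽²⁾⁽¹⁾ x⁽³⁾`
(the product, in `T`, of the five factors of `(Id ⊗ μᵒᵖ ⊗ Id)(μ(x))` in order);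
in particular `θ` is uniquely determined by `m_T` and `μ_T`. -/
theorem theta_formula (k : Type*) [Field k]
    (A : Type*) [CommRing A] [IsDomain A] [Algebra k A]
    (T : Type*) [Ring T] [Algebra A T]
    (μ : T →ₗ[A] T ⊗[A] (Tᵐᵒᵖ ⊗[A] (T))) (θ : T →ₗ[A] T)
    (h : IsTorsor A T μ θ) :
    (∀ x : T, θ x = mult5 A T (muMid A T μ (μ x))) ∧
    (∀ θ' : T →ₗ[A] T, IsTorsor A T μ θ' → θ' = θ) := by
  have key : ∀ x : T, θ x = mult5 A T (muMid A T μ (μ x)) := by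
    intro x
    rw [← h.theta_law x, K1]
    have hθ : Fth A T θ ∘ₗ μ = θ := LinearMap.ext (K2 A T μ θ h.right_law)
    rw [hθ]
    have : map θ (mulOT A T) = map θ LinearMap.id ∘ₗ map LinearMap.id (mulOT A T) := by
      rw [← TensorProduct.map_comp]; simp
    rw [this]
    simp only [LinearMap.comp_apply]
    rw [h.left_law x]
    simp [mulTT]
  refine ⟨key, fun θ' h' => LinearMap.ext fun x => ?_⟩
  have key' : ∀ x : T, θ' x = mult5 A T (muMid A T μ (μ x)) := by
    intro x
    rw [← h'.theta_law x, K1]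
    have hθ : Fth A T θ' ∘ₗ μ = θ' := LinearMap.ext (K2 A T μ θ' h'.right_law)
    rw [hθ]
    have : map θ' (mulOT A T) = map θ' LinearMap.id ∘ₗ map LinearMap.id (mulOT A T) := by
      rw [← TensorProduct.map_comp]; simp
    rw [this]
    simp only [LinearMap.comp_apply]
    rw [h'.left_law x]
    simp [mulTT]
  rw [key x, key' x]
end

section
/- Let (T, m_T, 1_T, μ_T, θ_T) be an A-torsor endowed with a commutative law, i.e., μ_T = μ_T^op := τ_(13)∘μ_T. Then H_l(T) = H_r(T) as subsets of T ⊗_A T. -/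
/- Common setup: quantum torsors following Grunspan, "Quantum torsors".
   `T` is an `A`-algebra; the torsor law is an algebra morphism
   `μ : T → T ⊗[A] (Tᵐᵒᵖ ⊗[A] (T))` and `θ : T → T` is an algebra automorphism. -/

open scoped TensorProduct
open TensorProduct

set_option synthInstance.maxHeartbeats 400000
set_option maxHeartbeats 1600000

namespace QTX

open QT MulOpposite

variable (A : Type*) [CommRing A] (T : Type*) [Ring T] [Algebra A T]

@[simp] lemma opL_apply (t : T) : opL A T t = op t := rfl

@[simp] lemma unopL_apply (t : Tᵐᵒᵖ) : unopL A T t = unop t := rfl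

@[simp] lemma mulTT_tmul (a b : T) : mulTT A T (a ⊗ₜ[A] b) = a * b := rfl

@[simp] lemma mulOT_tmul (a : Tᵐᵒᵖ) (b : T) : mulOT A T (a ⊗ₜ[A] b) = unop a * b := by
  simp [mulOT]

@[simp] lemma mulTO_tmul (a : T) (b : Tᵐᵒᵖ) : mulTO A T (a ⊗ₜ[A] b) = a * unop b := by
  simp [mulTO]

@[simp] lemma tau13_tmul (p : T) (q : Tᵐᵒᵖ) (r : T) :
    tau13 A T (p ⊗ₜ[A] (q ⊗ₜ[A] r)) = r ⊗ₜ[A] (q ⊗ₜ[A] p) := by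
  simp [tau13]

@[simp] lemma oppify_tmul (p : T) (q : Tᵐᵒᵖ) (r : T) :
    oppify A T (p ⊗ₜ[A] (q ⊗ₜ[A] r)) = op p ⊗ₜ[A] (unop q ⊗ₜ[A] op r) := by
  simp [oppify]

@[simp] lemma m12_tmul (p : T) (q : Tᵐᵒᵖ) (r : T) :
    m12 A T (p ⊗ₜ[A] (q ⊗ₜ[A] r)) = (p * unop q) ⊗ₜ[A] r := by
  simp [m12]

lemma tau13_tau13 (m : T ⊗[A] (Tᵐᵒᵖ ⊗[A] T)) : tau13 A T (tau13 A T m) = m := by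
  induction m using TensorProduct.induction_on with
  | zero => simp
  | tmul p qr =>
    induction qr using TensorProduct.induction_on with
    | zero => simp
    | tmul q r => simp
    | add x y hx hy => simp only [TensorProduct.tmul_add, map_add, hx, hy]
  | add x y hx hy => simp [hx, hy]

/-- `m ⊗ t` reassociated into `T ⊗ Tᵐᵒᵖ ⊗ T ⊗ Tᵐᵒᵖ`. -/
noncomputable def padR (t : Tᵐᵒᵖ) :
    T ⊗[A] (Tᵐᵒᵖ ⊗[A] T) →ₗ[A] T ⊗[A] (Tᵐᵒᵖ ⊗[A] (T ⊗[A] Tᵐᵒᵖ)) :=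
  map LinearMap.id (TensorProduct.assoc A Tᵐᵒᵖ T Tᵐᵒᵖ).toLinearMap ∘ₗ
  (TensorProduct.assoc A T (Tᵐᵒᵖ ⊗[A] T) Tᵐᵒᵖ).toLinearMap ∘ₗ
  (TensorProduct.mk A (T ⊗[A] (Tᵐᵒᵖ ⊗[A] T)) Tᵐᵒᵖ).flip t

@[simp] lemma padR_tmul (t : Tᵐᵒᵖ) (p : T) (q : Tᵐᵒᵖ) (r : T) :
    padR A T t (p ⊗ₜ[A] (q ⊗ₜ[A] r)) = p ⊗ₜ[A] (q ⊗ₜ[A] (r ⊗ₜ[A] t)) := by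
  simp [padR]

/-- `n ⊗ u` reassociated into `Tᵐᵒᵖ ⊗ T ⊗ Tᵐᵒᵖ ⊗ T`. -/
noncomputable def padL (u : T) :
    Tᵐᵒᵖ ⊗[A] (T ⊗[A] Tᵐᵒᵖ) →ₗ[A] Tᵐᵒᵖ ⊗[A] (T ⊗[A] (Tᵐᵒᵖ ⊗[A] T)) :=
  map LinearMap.id (TensorProduct.assoc A T Tᵐᵒᵖ T).toLinearMap ∘ₗ
  (TensorProduct.assoc A Tᵐᵒᵖ (T ⊗[A] Tᵐᵒᵖ) T).toLinearMap ∘ₗ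
  (TensorProduct.mk A (Tᵐᵒᵖ ⊗[A] (T ⊗[A] Tᵐᵒᵖ)) T).flip u

@[simp] lemma padL_tmul (u : T) (p : Tᵐᵒᵖ) (q : T) (r : Tᵐᵒᵖ) :
    padL A T u (p ⊗ₜ[A] (q ⊗ₜ[A] r)) = p ⊗ₜ[A] (q ⊗ₜ[A] (r ⊗ₜ[A] u)) := by
  simp [padL]

/-- `op ⊗ unop`, the identity on underlying elements. -/
noncomputable def psiE : T ⊗[A] Tᵐᵒᵖ ≃ₗ[A] Tᵐᵒᵖ ⊗[A] T :=
  TensorProduct.congr (opLinearEquiv A : T ≃ₗ[A] Tᵐᵒᵖ)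
    (opLinearEquiv A : T ≃ₗ[A] Tᵐᵒᵖ).symm

@[simp] lemma psiE_tmul (a : T) (b : Tᵐᵒᵖ) :
    psiE A T (a ⊗ₜ[A] b) = op a ⊗ₜ[A] unop b := by
  simp [psiE]

/-- the flip `a ⊗ op b ↦ b ⊗ op a`. -/
noncomputable def swpE : T ⊗[A] Tᵐᵒᵖ ≃ₗ[A] T ⊗[A] Tᵐᵒᵖ :=
  TensorProduct.comm A T Tᵐᵒᵖ ≪≫ₗ
  TensorProduct.congr (opLinearEquiv A : T ≃ₗ[A] Tᵐᵒᵖ).symm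
    (opLinearEquiv A : T ≃ₗ[A] Tᵐᵒᵖ)

@[simp] lemma swpE_tmul (a : T) (b : Tᵐᵒᵖ) :
    swpE A T (a ⊗ₜ[A] b) = unop b ⊗ₜ[A] op a := by
  simp [swpE]

lemma swpE_swpE (x : T ⊗[A] Tᵐᵒᵖ) : swpE A T (swpE A T x) = x := by
  induction x using TensorProduct.induction_on with
  | zero => simp
  | tmul a b => simp
  | add x y hx hy => simp [hx, hy]

/-- full reversal of `T ⊗ Tᵐᵒᵖ ⊗ T ⊗ Tᵐᵒᵖ` (with `op`-pattern fixed up). -/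
noncomputable def rev4E :
    T ⊗[A] (Tᵐᵒᵖ ⊗[A] (T ⊗[A] Tᵐᵒᵖ)) ≃ₗ[A] T ⊗[A] (Tᵐᵒᵖ ⊗[A] (T ⊗[A] Tᵐᵒᵖ)) :=
  (TensorProduct.assoc A T Tᵐᵒᵖ (T ⊗[A] Tᵐᵒᵖ)).symm ≪≫ₗ
  TensorProduct.comm A (T ⊗[A] Tᵐᵒᵖ) (T ⊗[A] Tᵐᵒᵖ) ≪≫ₗ
  TensorProduct.congr (swpE A T) (swpE A T) ≪≫ₗ
  TensorProduct.assoc A T Tᵐᵒᵖ (T ⊗[A] Tᵐᵒᵖ)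

@[simp] lemma rev4E_tmul (t1 : T) (t2 : Tᵐᵒᵖ) (t3 : T) (t4 : Tᵐᵒᵖ) :
    rev4E A T (t1 ⊗ₜ[A] (t2 ⊗ₜ[A] (t3 ⊗ₜ[A] t4)))
      = unop t4 ⊗ₜ[A] (op t3 ⊗ₜ[A] (unop t2 ⊗ₜ[A] op t1)) := by
  simp [rev4E]

/-- full reversal `T ⊗ Tᵐᵒᵖ ⊗ T ⊗ Tᵐᵒᵖ → Tᵐᵒᵖ ⊗ T ⊗ Tᵐᵒᵖ ⊗ T` (no `op`-fixes needed). -/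
noncomputable def thE :
    T ⊗[A] (Tᵐᵒᵖ ⊗[A] (T ⊗[A] Tᵐᵒᵖ)) ≃ₗ[A] Tᵐᵒᵖ ⊗[A] (T ⊗[A] (Tᵐᵒᵖ ⊗[A] T)) :=
  (TensorProduct.assoc A T Tᵐᵒᵖ (T ⊗[A] Tᵐᵒᵖ)).symm ≪≫ₗ
  TensorProduct.comm A (T ⊗[A] Tᵐᵒᵖ) (T ⊗[A] Tᵐᵒᵖ) ≪≫ₗ
  TensorProduct.congr (TensorProduct.comm A T Tᵐᵒᵖ) (TensorProduct.comm A T Tᵐᵒᵖ) ≪≫ₗ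
  TensorProduct.assoc A Tᵐᵒᵖ T (Tᵐᵒᵖ ⊗[A] T)

@[simp] lemma thE_tmul (t1 : T) (t2 : Tᵐᵒᵖ) (t3 : T) (t4 : Tᵐᵒᵖ) :
    thE A T (t1 ⊗ₜ[A] (t2 ⊗ₜ[A] (t3 ⊗ₜ[A] t4)))
      = t4 ⊗ₜ[A] (t3 ⊗ₜ[A] (t2 ⊗ₜ[A] t1)) := by
  simp [thE]

section Formal

variable (μ : T →ₗ[A] T ⊗[A] (Tᵐᵒᵖ ⊗[A] T))

lemma muopO_apply (b : Tᵐᵒᵖ) :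
    muopO A T μ b = oppify A T (tau13 A T (μ (unop b))) := by
  simp [muopO]

lemma lmapL_tmul (a : T) (b : Tᵐᵒᵖ) :
    lmapL A T μ LinearMap.id (a ⊗ₜ[A] b) = padR A T b (μ a) := by
  simp [lmapL, padR, TensorProduct.map_id]

lemma rmapL_tmul (a : T) (b : Tᵐᵒᵖ) :
    rmapL A T μ (a ⊗ₜ[A] b) = a ⊗ₜ[A] muopO A T μ b := by
  simp [rmapL]

lemma lmapR_tmul (s : Tᵐᵒᵖ) (t : T) :
    lmapR A T μ LinearMap.id (s ⊗ₜ[A] t) = s ⊗ₜ[A] μ t := by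
  simp [lmapR, TensorProduct.map_id]

lemma rmapR_tmul (s : Tᵐᵒᵖ) (t : T) :
    rmapR A T μ (s ⊗ₜ[A] t) = padL A T t (muopO A T μ s) := by
  simp [rmapR, padL]

lemma F1 (b : Tᵐᵒᵖ) (m : T ⊗[A] (Tᵐᵒᵖ ⊗[A] T)) :
    rev4E A T (padR A T b m) = unop b ⊗ₜ[A] oppify A T (tau13 A T m) := by
  induction m using TensorProduct.induction_on with
  | zero => simp
  | tmul p qr =>
    induction qr using TensorProduct.induction_on with
    | zero => simp
    | tmul q r => simp
    | add x y hx hy =>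
      simp only [TensorProduct.tmul_add, map_add, hx, hy]
  | add x y hx hy => simp [hx, hy, TensorProduct.tmul_add]

lemma F2 (a : T) (w : T ⊗[A] (Tᵐᵒᵖ ⊗[A] T)) :
    rev4E A T (a ⊗ₜ[A] oppify A T w) = padR A T (op a) (tau13 A T w) := by
  induction w using TensorProduct.induction_on with
  | zero => simp
  | tmul p qr =>
    induction qr using TensorProduct.induction_on with
    | zero => simp
    | tmul q r => simp
    | add x y hx hy =>
      simp only [TensorProduct.tmul_add, map_add, hx, hy]
  | add x y hx hy => simp [hx, hy, TensorProduct.tmul_add]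

lemma F3 (b : Tᵐᵒᵖ) (m : T ⊗[A] (Tᵐᵒᵖ ⊗[A] T)) :
    thE A T (padR A T b m) = b ⊗ₜ[A] tau13 A T m := by
  induction m using TensorProduct.induction_on with
  | zero => simp
  | tmul p qr =>
    induction qr using TensorProduct.induction_on with
    | zero => simp
    | tmul q r => simp
    | add x y hx hy =>
      simp only [TensorProduct.tmul_add, map_add, hx, hy]
  | add x y hx hy => simp [hx, hy, TensorProduct.tmul_add]

lemma F4 (a : T) (w : T ⊗[A] (Tᵐᵒᵖ ⊗[A] T)) :
    thE A T (a ⊗ₜ[A] oppify A T w) = padL A T a (oppify A T (tau13 A T w)) := by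
  induction w using TensorProduct.induction_on with
  | zero => simp
  | tmul p qr =>
    induction qr using TensorProduct.induction_on with
    | zero => simp
    | tmul q r => simp
    | add x y hx hy =>
      simp only [TensorProduct.tmul_add, map_add, hx, hy]
  | add x y hx hy => simp [hx, hy, TensorProduct.tmul_add]

lemma F5 (w : T ⊗[A] (Tᵐᵒᵖ ⊗[A] T)) :
    mulOT A T (map LinearMap.id (mulTO A T) (oppify A T w))
      = mulTT A T (map LinearMap.id (mulOT A T) w) := by
  induction w using TensorProduct.induction_on with
  | zero => simp
  | tmul p qr =>
    induction qr using TensorProduct.induction_on with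
    | zero => simp
    | tmul q r => simp
    | add x y hx hy =>
      simp only [TensorProduct.tmul_add, map_add, hx, hy]
  | add x y hx hy => simp [hx, hy, TensorProduct.tmul_add]

end Formal

section ThetaId

variable (μ : T →ₗ[A] T ⊗[A] (Tᵐᵒᵖ ⊗[A] T)) (θ : T →ₗ[A] T)

lemma FA0 (m : T ⊗[A] (Tᵐᵒᵖ ⊗[A] T)) (sz : Tᵐᵒᵖ ⊗[A] T) :
    mult5 A T (theta3 A T θ
      (map LinearMap.id (TensorProduct.assoc A Tᵐᵒᵖ T (Tᵐᵒᵖ ⊗[A] T)).toLinearMap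
        ((TensorProduct.assoc A T (Tᵐᵒᵖ ⊗[A] T) (Tᵐᵒᵖ ⊗[A] T)).toLinearMap
          (m ⊗ₜ[A] sz))))
      = mulTT A T (map LinearMap.id θ (m12 A T m)) * mulOT A T sz := by
  induction m using TensorProduct.induction_on with
  | zero => simp
  | tmul p qr =>
    induction qr using TensorProduct.induction_on with
    | zero => simp
    | tmul q r => simp [mult5, theta3, mul_assoc]
    | add x y hx hy =>
      simp only [TensorProduct.tmul_add, TensorProduct.add_tmul, map_add, hx, hy, add_mul]
  | add x y hx hy =>
    simp only [TensorProduct.add_tmul, map_add, hx, hy, add_mul]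

lemma FB0 (u : T) (n : Tᵐᵒᵖ ⊗[A] (T ⊗[A] Tᵐᵒᵖ)) (z : T) :
    mult5 A T (u ⊗ₜ[A]
      (map LinearMap.id (TensorProduct.assoc A T Tᵐᵒᵖ T).toLinearMap
        ((TensorProduct.assoc A Tᵐᵒᵖ (T ⊗[A] Tᵐᵒᵖ) T).toLinearMap (n ⊗ₜ[A] z))))
      = u * (mulOT A T (map LinearMap.id (mulTO A T) n) * z) := by
  induction n using TensorProduct.induction_on with
  | zero => simp
  | tmul p qr =>
    induction qr using TensorProduct.induction_on with
    | zero => simp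
    | tmul q r => simp [mult5, mul_assoc]
    | add x y hx hy =>
      simp only [TensorProduct.tmul_add, TensorProduct.add_tmul, map_add, hx, hy,
        TensorProduct.tmul_add, mul_add, add_mul]
  | add x y hx hy =>
    simp only [TensorProduct.add_tmul, map_add, hx, hy, TensorProduct.tmul_add, mul_add, add_mul]

lemma theta_eq_id (h : IsTorsor A T μ θ) (hc : ∀ x : T, tau13 A T (μ x) = μ x) (x : T) :
    θ x = x := by
  have hcoll : ∀ t : T, mulTT A T (map LinearMap.id (mulOT A T) (μ t)) = t := by
    intro t; rw [h.left_law]; simp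
  -- step 1 : mult5 applied to the LHS of the theta law gives `θ x`
  have E1 : mult5 A T (theta3 A T θ (mu1 A T μ (μ x))) = θ x := by
    have FA : ∀ v : T ⊗[A] (Tᵐᵒᵖ ⊗[A] T),
        mult5 A T (theta3 A T θ (mu1 A T μ v))
          = mulTT A T (map ((mulTT A T ∘ₗ map LinearMap.id θ ∘ₗ m12 A T) ∘ₗ μ)
              (mulOT A T) v) := by
      intro v
      induction v using TensorProduct.induction_on with
      | zero => simp
      | tmul u sz =>
        simp only [mu1, LinearMap.coe_comp, Function.comp_apply, map_tmul,
          LinearMap.id_coe, id_eq]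
        exact FA0 A T θ (μ u) sz
      | add x y hx hy => simp only [map_add, hx, hy]
    rw [FA (μ x)]
    have hKθ : (mulTT A T ∘ₗ map LinearMap.id θ ∘ₗ m12 A T) ∘ₗ μ = θ := by
      apply LinearMap.ext; intro t
      simp only [LinearMap.coe_comp, Function.comp_apply]
      rw [h.right_law]
      simp
    rw [hKθ]
    have hsplit : map θ (mulOT A T)
        = map θ LinearMap.id ∘ₗ map LinearMap.id (mulOT A T) := by
      rw [← TensorProduct.map_comp, LinearMap.comp_id, LinearMap.id_comp]
    rw [hsplit]
    simp only [LinearMap.coe_comp, Function.comp_apply]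
    rw [h.left_law]
    simp
  -- step 2 : mult5 applied to the RHS of the theta law gives `x`
  have E2 : mult5 A T (muMid A T μ (μ x)) = x := by
    have FB : ∀ v : T ⊗[A] (Tᵐᵒᵖ ⊗[A] T),
        mult5 A T (muMid A T μ v)
          = mulTT A T (map LinearMap.id
              (mulTT A T ∘ₗ
                map ((mulOT A T ∘ₗ map LinearMap.id (mulTO A T)) ∘ₗ muopO A T μ)
                  LinearMap.id) v) := by
      intro v
      induction v using TensorProduct.induction_on with
      | zero => simp
      | tmul u sz =>
        simp only [muMid, LinearMap.coe_comp, Function.comp_apply, map_tmul,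
          LinearMap.id_coe, id_eq]
        induction sz using TensorProduct.induction_on with
        | zero => simp
        | tmul s z =>
          simp only [LinearMap.coe_comp, Function.comp_apply, map_tmul,
            LinearMap.id_coe, id_eq, mulTT_tmul]
          exact FB0 A T u (muopO A T μ s) z
        | add x y hx hy =>
          simp only [map_add, TensorProduct.tmul_add, hx, hy]
      | add x y hx hy => simp only [map_add, hx, hy]
    rw [FB (μ x)]
    have hKunop : (mulOT A T ∘ₗ map LinearMap.id (mulTO A T)) ∘ₗ muopO A T μ
        = unopL A T := by
      apply LinearMap.ext; intro s
      simp only [LinearMap.coe_comp, Function.comp_apply, unopL_apply]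
      rw [muopO_apply, hc, F5]
      exact hcoll (unop s)
    rw [hKunop]
    have : mulTT A T ∘ₗ map (unopL A T) LinearMap.id = mulOT A T := rfl
    rw [this]
    exact hcoll x
  have := congrArg (mult5 A T) (h.theta_law x)
  rw [E1, E2] at this
  exact this

end ThetaId

section Intertwine

variable (μ : T →ₗ[A] T ⊗[A] (Tᵐᵒᵖ ⊗[A] T))

lemma I1 : (rev4E A T).toLinearMap ∘ₗ lmapL A T μ LinearMap.id
    = rmapL A T μ ∘ₗ (swpE A T).toLinearMap := by
  apply TensorProduct.ext'
  intro a b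
  simp only [LinearMap.coe_comp, Function.comp_apply, LinearEquiv.coe_coe]
  rw [lmapL_tmul, F1, swpE_tmul, rmapL_tmul, muopO_apply]
  simp

lemma I2 : (rev4E A T).toLinearMap ∘ₗ rmapL A T μ
    = lmapL A T μ LinearMap.id ∘ₗ (swpE A T).toLinearMap := by
  apply TensorProduct.ext'
  intro a b
  simp only [LinearMap.coe_comp, Function.comp_apply, LinearEquiv.coe_coe]
  rw [rmapL_tmul, muopO_apply, F2, tau13_tau13, swpE_tmul, lmapL_tmul]

lemma I3 (hc : ∀ x : T, tau13 A T (μ x) = μ x) :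
    (thE A T).toLinearMap ∘ₗ lmapL A T μ LinearMap.id
    = lmapR A T μ LinearMap.id ∘ₗ (psiE A T).toLinearMap ∘ₗ (swpE A T).toLinearMap := by
  apply TensorProduct.ext'
  intro a b
  simp only [LinearMap.coe_comp, Function.comp_apply, LinearEquiv.coe_coe]
  rw [lmapL_tmul, F3, hc, swpE_tmul, psiE_tmul, op_unop, unop_op, lmapR_tmul]

lemma I4 (hc : ∀ x : T, tau13 A T (μ x) = μ x) :
    (thE A T).toLinearMap ∘ₗ rmapL A T μ
    = rmapR A T μ ∘ₗ (psiE A T).toLinearMap ∘ₗ (swpE A T).toLinearMap := by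
  apply TensorProduct.ext'
  intro a b
  simp only [LinearMap.coe_comp, Function.comp_apply, LinearEquiv.coe_coe]
  rw [rmapL_tmul, muopO_apply, hc, F4, hc, swpE_tmul, psiE_tmul, op_unop, unop_op,
    rmapR_tmul, muopO_apply, hc]

end Intertwine

end QTX

open TensorProduct QT in
/-- Note 3.6: if the torsor is endowed with a commutative law
(`μ_T = τ₍₁₃₎ ∘ μ_T`) then `H_l(T) = H_r(T)` inside `T ⊗ T`. -/
theorem Hl_eq_Hr_of_commutative_law (k : Type*) [Field k]
    (A : Type*) [CommRing A] [IsDomain A] [Algebra k A]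
    (T : Type*) [Ring T] [Algebra A T]
    (μ : T →ₗ[A] T ⊗[A] (Tᵐᵒᵖ ⊗[A] (T))) (θ : T →ₗ[A] T)
    (h : IsTorsor A T μ θ)
    (hc : ∀ x : T, tau13 A T (μ x) = μ x) :
    Submodule.map (forgetL A T).toLinearMap (Hl A T μ θ)
      = Submodule.map (forgetR A T).toLinearMap (Hr A T μ θ) := by
  have hθ : θ = LinearMap.id := LinearMap.ext (QTX.theta_eq_id A T μ θ h hc)
  subst hθ
  have hswap : ∀ x : T ⊗[A] Tᵐᵒᵖ, x ∈ Hl A T μ LinearMap.id →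
      QTX.swpE A T x ∈ Hl A T μ LinearMap.id := by
    intro x hx
    rw [Hl, LinearMap.mem_eqLocus] at hx ⊢
    have h1 := LinearMap.congr_fun (QTX.I1 A T μ) x
    have h2 := LinearMap.congr_fun (QTX.I2 A T μ) x
    simp only [LinearMap.coe_comp, Function.comp_apply, LinearEquiv.coe_coe] at h1 h2
    rw [← h2, ← h1, hx]
  have hmem : ∀ x : T ⊗[A] Tᵐᵒᵖ,
      x ∈ Hl A T μ LinearMap.id ↔ QTX.psiE A T x ∈ Hr A T μ LinearMap.id := by
    intro x
    have h3 := LinearMap.congr_fun (QTX.I3 A T μ hc) (QTX.swpE A T x)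
    have h4 := LinearMap.congr_fun (QTX.I4 A T μ hc) (QTX.swpE A T x)
    simp only [LinearMap.coe_comp, Function.comp_apply, LinearEquiv.coe_coe,
      QTX.swpE_swpE] at h3 h4
    constructor
    · intro hx
      have hx' := hswap x hx
      rw [Hl, LinearMap.mem_eqLocus] at hx'
      rw [Hr, LinearMap.mem_eqLocus]
      rw [← h3, ← h4, hx']
    · intro hx
      rw [Hr, LinearMap.mem_eqLocus] at hx
      have heq : (QTX.thE A T) (lmapL A T μ LinearMap.id (QTX.swpE A T x))
          = (QTX.thE A T) (rmapL A T μ (QTX.swpE A T x)) := by rw [h3, h4, hx]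
      have hsw : lmapL A T μ LinearMap.id (QTX.swpE A T x)
          = rmapL A T μ (QTX.swpE A T x) := (QTX.thE A T).injective heq
      have hmemsw : QTX.swpE A T x ∈ Hl A T μ LinearMap.id := by
        rw [Hl, LinearMap.mem_eqLocus]; exact hsw
      have := hswap _ hmemsw
      rwa [QTX.swpE_swpE] at this
  have hcomp : (forgetR A T).toLinearMap ∘ₗ (QTX.psiE A T).toLinearMap
      = (forgetL A T).toLinearMap := by
    apply TensorProduct.ext'
    intro a b
    simp [forgetL, forgetR, QTX.psiE]
  have himg : Submodule.map (QTX.psiE A T).toLinearMap (Hl A T μ LinearMap.id)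
      = Hr A T μ LinearMap.id := by
    apply le_antisymm
    · rintro y ⟨x, hx, rfl⟩
      exact (hmem x).1 hx
    · intro y hy
      refine ⟨(QTX.psiE A T).symm y, (hmem _).2 ?_, by simp⟩
      rw [LinearEquiv.apply_symm_apply]
      exact hy
  rw [← hcomp, Submodule.map_comp, himg]
end
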